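/- Let T be continuously differentiable in a neighborhood of its unique zero t_0 with T'(t_0) < 0, and let T_n be random functions with √n·sup_t |T_n(t) - T(t)| = O_p(1) and t_n → t_0 in probability, where t_n = sup{t : T_n(t) ≥ 0}. Then t_n = t_0 + O_p(n^{-1/2}), i.e., the sequence √n(t_n - t_0) is bounded in probability. -/

import Mathlib

open MeasureTheory Set Filter

theorem stmt11 {Ω : Type*} [MeasurableSpace Ω] (μ : Measure Ω) [IsProbabilityMeasure μ]
    (t₀ : ℝ) (T : ℝ → ℝ) (Tn : ℕ → Ω → ℝ → ℝ) (tn : ℕ → Ω → ℝ)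
    (hC1 : ∃ δ > 0, ContDiffOn ℝ 1 T (Metric.ball t₀ δ))
    (hzero : T t₀ = 0) (huniq : ∀ t, T t = 0 → t = t₀)
    (hderiv : deriv T t₀ < 0)
    (hOp : ∀ ε > 0, ∃ M : ℝ, limsup
      (fun n : ℕ => (μ {ω | ∃ t : ℝ, M < Real.sqrt n * |Tn n ω t - T t|}).toReal) atTop < ε)
    (htn : ∀ n ω, tn n ω = sSup {t : ℝ | 0 ≤ Tn n ω t})
    (hcons : ∀ ε > 0, Tendsto
      (fun n => (μ {ω | ε < |tn n ω - t₀|}).toReal) atTop (nhds 0)) :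
    ∀ ε > 0, ∃ M : ℝ, limsup
      (fun n : ℕ => (μ {ω | M < Real.sqrt n * |tn n ω - t₀|}).toReal) atTop < ε := by
  intro ε hε
  obtain ⟨δ, hδpos, hT⟩ := hC1
  set c : ℝ := -deriv T t₀ / 2 with hc
  have hcpos : 0 < c := by rw [hc]; linarith
  -- continuity of deriv near t₀ and a ball where deriv < -c
  have hder_cont : ContinuousOn (deriv T) (Metric.ball t₀ δ) :=
    hT.continuousOn_deriv_of_isOpen Metric.isOpen_ball le_rfl
  have hat : ContinuousAt (deriv T) t₀ :=
    hder_cont.continuousAt (Metric.ball_mem_nhds t₀ hδpos)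
  have hev1 : ∀ᶠ s in nhds t₀, deriv T s < -c := by
    have : deriv T t₀ < -c := by rw [hc]; linarith
    exact hat.eventually_lt continuousAt_const this
  have hev2 : ∀ᶠ s in nhds t₀, s ∈ Metric.ball t₀ δ :=
    Metric.ball_mem_nhds t₀ hδpos
  obtain ⟨δ', hδ'pos, hδ'⟩ := Metric.eventually_nhds_iff.mp (hev1.and hev2)
  have hsub : Metric.ball t₀ δ' ⊆ Metric.ball t₀ δ := fun y hy =>
    (hδ' (Metric.mem_ball.mp hy)).2
  have hdiff : ∀ x ∈ Metric.ball t₀ δ, DifferentiableAt ℝ T x := fun x hx =>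
    ((hT.differentiableOn one_ne_zero).differentiableAt (Metric.isOpen_ball.mem_nhds hx))
  -- strict antitonicity of T t + c t on small ball
  have hanti : StrictAntiOn (fun t => T t + c * t) (Metric.ball t₀ δ') := by
    apply strictAntiOn_of_deriv_neg (convex_ball t₀ δ')
    · exact (hT.continuousOn.mono hsub).add
        ((continuous_const.mul continuous_id).continuousOn)
    · intro x hx
      rw [Metric.isOpen_ball.interior_eq] at hx
      have hdx : DifferentiableAt ℝ T x := hdiff x (hsub hx)
      have hd : HasDerivAt (fun t => T t + c * t) (deriv T x + c * 1) x :=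
        hdx.hasDerivAt.add ((hasDerivAt_id x).const_mul c)
      rw [hd.deriv]
      have := (hδ' (Metric.mem_ball.mp hx)).1
      linarith
  -- key quantitative bound
  have key : ∀ t, dist t t₀ < δ' →
      (t₀ ≤ t → T t ≤ -c * (t - t₀)) ∧ (t ≤ t₀ → c * (t₀ - t) ≤ T t) := by
    intro t ht
    have ht₀ : t₀ ∈ Metric.ball t₀ δ' := Metric.mem_ball_self hδ'pos
    have htb : t ∈ Metric.ball t₀ δ' := Metric.mem_ball.mpr ht
    constructor
    · intro hle
      rcases eq_or_lt_of_le hle with h | h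
      · rw [← h, hzero]; ring_nf; rfl
      · have := hanti ht₀ htb h
        simp only at this
        nlinarith
    · intro hle
      rcases eq_or_lt_of_le hle with h | h
      · rw [h, hzero]; ring_nf; rfl
      · have := hanti htb ht₀ h
        simp only at this
        nlinarith
  -- choose M' from hOp, define M, ε₀
  obtain ⟨M', hM'⟩ := hOp (ε/2) (by linarith)
  refine ⟨max (2 * M' / c) 0, ?_⟩
  set M : ℝ := max (2 * M' / c) 0 with hMdef
  have hMnonneg : 0 ≤ M := le_max_right _ _
  have hcM : 2 * M' ≤ c * M := by
    rcases le_or_gt M' 0 with h | h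
    · have : 0 ≤ c * M := mul_nonneg hcpos.le hMnonneg
      linarith
    · have hMe : M = 2 * M' / c := max_eq_left (by positivity)
      rw [hMe]; field_simp; exact le_rfl
  have hM'cM : M' ≤ c * M := by
    rcases le_or_gt M' 0 with h | h
    · have : 0 ≤ c * M := mul_nonneg hcpos.le hMnonneg
      linarith
    · linarith
  set ε₀ : ℝ := if t₀ = 0 then δ' / 2 else min (δ' / 2) (|t₀| / 2) with hε₀def
  have hε₀pos : 0 < ε₀ := by
    rw [hε₀def]; split_ifs with h
    · linarith
    · exact lt_min (by linarith) (by positivity)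
  have hε₀δ : ε₀ ≤ δ' / 2 := by
    rw [hε₀def]; split_ifs with h
    · exact le_rfl
    · exact min_le_left _ _
  -- eventual conditions on n
  have hevn : ∀ᶠ n : ℕ in atTop, 1 ≤ Real.sqrt n ∧ M / Real.sqrt n < δ' / 2 := by
    filter_upwards [eventually_ge_atTop (⌈(max 1 ((2*M+1)/δ'))^2⌉₊)] with n hn
    have h0 : (0:ℝ) ≤ max 1 ((2*M+1)/δ') := le_trans zero_le_one (le_max_left _ _)
    have h1 : (max 1 ((2*M+1)/δ'))^2 ≤ (n:ℝ) :=
      le_trans (Nat.le_ceil _) (Nat.cast_le.mpr hn)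
    have h2 : max 1 ((2*M+1)/δ') ≤ Real.sqrt n := by
      rw [show max 1 ((2*M+1)/δ') = Real.sqrt ((max 1 ((2*M+1)/δ'))^2) by
        rw [Real.sqrt_sq h0]]
      exact Real.sqrt_le_sqrt h1
    have hs1 : 1 ≤ Real.sqrt n := le_trans (le_max_left _ _) h2
    refine ⟨hs1, ?_⟩
    have hs2 : (2*M+1)/δ' ≤ Real.sqrt n := le_trans (le_max_right _ _) h2
    have hspos : 0 < Real.sqrt n := lt_of_lt_of_le one_pos hs1
    rw [div_lt_iff₀ hspos]
    have : 2*M+1 ≤ δ' * Real.sqrt n := by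
      rw [div_le_iff₀ hδ'pos] at hs2; linarith [hs2]
    nlinarith
  -- the event inclusion
  have hincl : ∀ n : ℕ, 1 ≤ Real.sqrt n → M / Real.sqrt n < δ' / 2 →
      {ω | M < Real.sqrt n * |tn n ω - t₀|} ⊆
        {ω | ε₀ < |tn n ω - t₀|} ∪ {ω | ∃ t, M' < Real.sqrt n * |Tn n ω t - T t|} := by
    intro n h1 h2 ω hω
    by_cases hA : ε₀ < |tn n ω - t₀|
    · exact Or.inl hA
    right
    push_neg at hA
    have hsn : 0 < Real.sqrt n := lt_of_lt_of_le one_pos h1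
    set s := tn n ω with hs
    have hωM : M < Real.sqrt n * |s - t₀| := hω
    have hSdef : s = sSup {t : ℝ | 0 ≤ Tn n ω t} := htn n ω
    -- degenerate cases
    by_cases hS : {t : ℝ | 0 ≤ Tn n ω t}.Nonempty ∧ BddAbove {t : ℝ | 0 ≤ Tn n ω t}
    swap
    · exfalso
      have hs0 : s = 0 := by
        rw [hSdef]
        by_cases hne : {t : ℝ | 0 ≤ Tn n ω t}.Nonempty
        · have hbd : ¬ BddAbove {t : ℝ | 0 ≤ Tn n ω t} := fun hb => hS ⟨hne, hb⟩
          exact Real.sSup_of_not_bddAbove hbd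
        · rw [not_nonempty_iff_eq_empty] at hne
          rw [hne]; exact Real.sSup_empty
      by_cases ht0 : t₀ = 0
      · rw [hs0, ht0] at hωM
        simp at hωM
        linarith
      · have habs : |s - t₀| = |t₀| := by rw [hs0]; simp
        have hε₀t : ε₀ ≤ |t₀| / 2 := by
          rw [hε₀def, if_neg ht0]; exact min_le_right _ _
        have ht₀pos : 0 < |t₀| := abs_pos.mpr (sub_ne_zero.mp (by simpa using ht0))
        rw [habs] at hA
        linarith
    obtain ⟨hne, hbdd⟩ := hS
    have hMdiv : M / Real.sqrt n < |s - t₀| := by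
      rw [div_lt_iff₀ hsn]; linarith [mul_comm (Real.sqrt n) |s - t₀|]
    rcases lt_abs.mp hMdiv with hcase | hcase
    · -- Case A : t₀ + M/√n < s
      have hub : t₀ + M / Real.sqrt n < sSup {t : ℝ | 0 ≤ Tn n ω t} := by
        rw [← hSdef]; linarith
      obtain ⟨t', ht'S, ht'⟩ := exists_lt_of_lt_csSup hne hub
      have ht'le : t' ≤ s := by rw [hSdef]; exact le_csSup hbdd ht'S
      have hMs : 0 ≤ M / Real.sqrt n := div_nonneg hMnonneg hsn.le
      have ht'ge : t₀ < t' := by linarith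
      have ht'ball : dist t' t₀ < δ' := by
        rw [Real.dist_eq, abs_of_pos (by linarith : 0 < t' - t₀)]
        have : s - t₀ ≤ |s - t₀| := le_abs_self _
        linarith
      have hTt' : T t' ≤ -c * (t' - t₀) := (key t' ht'ball).1 ht'ge.le
      have hTn' : 0 ≤ Tn n ω t' := ht'S
      refine ⟨t', ?_⟩
      have hstep : c * M < Real.sqrt n * (Tn n ω t' - T t') := by
        have hc1 : c * (M / Real.sqrt n) < c * (t' - t₀) :=
          mul_lt_mul_of_pos_left (by linarith) hcpos
        have hc2 : c * (t' - t₀) ≤ Tn n ω t' - T t' := by nlinarith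
        have hcan : Real.sqrt n * (c * (M / Real.sqrt n)) = c * M := by
          field_simp
        calc c * M = Real.sqrt n * (c * (M / Real.sqrt n)) := hcan.symm
          _ < Real.sqrt n * (Tn n ω t' - T t') := by
              apply mul_lt_mul_of_pos_left _ hsn
              linarith
      have : Real.sqrt n * (Tn n ω t' - T t') ≤ Real.sqrt n * |Tn n ω t' - T t'| :=
        mul_le_mul_of_nonneg_left (le_abs_self _) hsn.le
      linarith
    · -- Case B : s < t₀ - M/√n
      set t : ℝ := t₀ - M / (2 * Real.sqrt n) with htdef
      have hMs : 0 ≤ M / Real.sqrt n := div_nonneg hMnonneg hsn.le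
      have hhalf : M / (2 * Real.sqrt n) ≤ M / Real.sqrt n := by
        have he : M / (2 * Real.sqrt n) = M / Real.sqrt n / 2 := by
          rw [div_div, mul_comm]
        rw [he]; linarith
      have hst : s < t := by
        rw [htdef]; linarith
      have htnotS : t ∉ {t : ℝ | 0 ≤ Tn n ω t} := by
        intro hmem
        have : t ≤ s := by rw [hSdef]; exact le_csSup hbdd hmem
        linarith
      have hTnt : Tn n ω t < 0 := lt_of_not_ge htnotS
      have htball : dist t t₀ < δ' := by
        rw [Real.dist_eq, htdef]
        have h0 : 0 ≤ M / (2 * Real.sqrt n) := by positivity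
        rw [show t₀ - M / (2 * Real.sqrt n) - t₀ = -(M / (2 * Real.sqrt n)) by ring,
          abs_neg, abs_of_nonneg h0]
        linarith
      have htle : t ≤ t₀ := by
        rw [htdef]; have : 0 ≤ M / (2 * Real.sqrt n) := by positivity
        linarith
      have hTt : c * (t₀ - t) ≤ T t := (key t htball).2 htle
      refine ⟨t, ?_⟩
      have hstep : c * M / 2 < Real.sqrt n * (T t - Tn n ω t) := by
        have ht₀t : t₀ - t = M / (2 * Real.sqrt n) := by rw [htdef]; ring
        have hcan : Real.sqrt n * (c * (M / (2 * Real.sqrt n))) = c * M / 2 := by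
          field_simp
        have h3 : c * (M / (2 * Real.sqrt n)) ≤ T t := by rw [← ht₀t]; exact hTt
        calc c * M / 2 = Real.sqrt n * (c * (M / (2 * Real.sqrt n))) := hcan.symm
          _ < Real.sqrt n * (T t - Tn n ω t) := by
              apply mul_lt_mul_of_pos_left _ hsn
              linarith
      have habs2 : Real.sqrt n * (T t - Tn n ω t) ≤ Real.sqrt n * |Tn n ω t - T t| := by
        apply mul_le_mul_of_nonneg_left _ hsn.le
        rw [abs_sub_comm]; exact le_abs_self _
      linarith
  -- measure bound
  have hbound : ∀ᶠ n : ℕ in atTop,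
      (μ {ω | M < Real.sqrt n * |tn n ω - t₀|}).toReal ≤
        (μ {ω | ε₀ < |tn n ω - t₀|}).toReal +
        (μ {ω | ∃ t, M' < Real.sqrt n * |Tn n ω t - T t|}).toReal := by
    filter_upwards [hevn] with n hn
    have h3 : μ {ω | M < Real.sqrt n * |tn n ω - t₀|} ≤
        μ {ω | ε₀ < |tn n ω - t₀|} + μ {ω | ∃ t, M' < Real.sqrt n * |Tn n ω t - T t|} :=
      le_trans (measure_mono (hincl n hn.1 hn.2)) (measure_union_le _ _)
    calc (μ {ω | M < Real.sqrt n * |tn n ω - t₀|}).toReal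
        ≤ (μ {ω | ε₀ < |tn n ω - t₀|} +
            μ {ω | ∃ t, M' < Real.sqrt n * |Tn n ω t - T t|}).toReal := by
          apply ENNReal.toReal_mono _ h3
          exact ENNReal.add_ne_top.mpr ⟨measure_ne_top μ _, measure_ne_top μ _⟩
      _ ≤ _ := ENNReal.toReal_add_le
  -- conclude
  have hle1 : ∀ s : Set Ω, (μ s).toReal ≤ 1 := fun s => by
    simpa using ENNReal.toReal_mono ENNReal.one_ne_top (prob_le_one (μ := μ) (s := s))
  have hBbdd : IsBoundedUnder (· ≤ ·) atTop
      (fun n : ℕ => (μ {ω | ∃ t, M' < Real.sqrt n * |Tn n ω t - T t|}).toReal) :=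
    isBoundedUnder_of ⟨1, fun n => hle1 _⟩
  have hevB : ∀ᶠ n : ℕ in atTop,
      (μ {ω | ∃ t, M' < Real.sqrt n * |Tn n ω t - T t|}).toReal < ε / 2 :=
    eventually_lt_of_limsup_lt hM' hBbdd
  have hevA : ∀ᶠ n : ℕ in atTop,
      (μ {ω | ε₀ < |tn n ω - t₀|}).toReal < ε / 4 :=
    (hcons ε₀ hε₀pos).eventually (gt_mem_nhds (by linarith))
  have hfinal : ∀ᶠ n : ℕ in atTop,
      (μ {ω | M < Real.sqrt n * |tn n ω - t₀|}).toReal ≤ 3 * ε / 4 := by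
    filter_upwards [hbound, hevB, hevA] with n hb hB hA
    linarith
  have hcob : IsCoboundedUnder (· ≤ ·) atTop
      (fun n : ℕ => (μ {ω | M < Real.sqrt n * |tn n ω - t₀|}).toReal) := by
    apply IsBoundedUnder.isCoboundedUnder_le
    exact ⟨0, eventually_map.2 (Eventually.of_forall fun n => ENNReal.toReal_nonneg)⟩
  exact lt_of_le_of_lt (limsup_le_of_le hcob hfinal) (by linarith)
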